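/- arXiv:1805.07604 — 3 statements merged into one kernel-verified Lean document; each statement's English description precedes it below -/
import Mathlib

section
/- Let k₀ ∈ ℤ∖{0}, k₂ ∈ ℤ, ε ∈ {+1, −1}, and set k₁ = k₀ + k₂. Assume k₁ ≠ 0. Then k₀ + 2k₂ + ε·sgn(k₀) = 0 if and only if k₀ = 2k₁ + ε·sgn(k₁) and k₂ = −ε·sgn(k₁) − k₁. In other words, the resonant frequencies of the one-dimensional Zakharov system are exactly the pairs (k₀, k₂) = (2k₁ + ε·sgn(k₁), −ε·sgn(k₁) − k₁), k₁ ∈ ℤ∖{0}. -/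
/-- **Resonant frequencies of the 1D Zakharov system.**
For `k₀ ≠ 0`, a sign `ε = ±1`, and `k₁ = k₀ + k₂ ≠ 0`, the resonance function
`k₀ + 2k₂ + ε sgn k₀` vanishes exactly when
`k₀ = 2k₁ + ε sgn k₁` and `k₂ = −ε sgn k₁ − k₁`. -/
theorem zakharov_resonant_frequencies
    (k₀ : ℤ) (hk₀ : k₀ ≠ 0) (k₂ : ℤ) (ε : ℤ) (hε : ε = 1 ∨ ε = -1)
    (k₁ : ℤ) (hk₁ : k₁ = k₀ + k₂) (hk₁ne : k₁ ≠ 0) :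
    k₀ + 2 * k₂ + ε * Int.sign k₀ = 0 ↔
      (k₀ = 2 * k₁ + ε * Int.sign k₁ ∧ k₂ = -(ε * Int.sign k₁) - k₁) := by
  rcases hε with rfl | rfl <;>
    rcases lt_or_gt_of_ne hk₀ with h0 | h0 <;>
    rcases lt_or_gt_of_ne hk₁ne with h1 | h1 <;>
    simp only [Int.sign_eq_one_of_pos, Int.sign_eq_neg_one_of_neg, h0, h1] <;>
    omega
end

section
/- There is an absolute constant C such that the following holds. Let N, L ≥ 1 be dyadic numbers and fix signs ε₁, ε₂ ∈ {+1, −1}. Let f, g ∈ L²(ℤ×ℝ) (with respect to counting measure times Lebesgue measure) be supported respectively in {(k,τ) : |k| ≈ N, |τ + ε₁|k|| ≈ L} and {(k,τ) : |k| ≈ N, |τ + ε₂|k|| ≈ L}. Then the convolution (f∗g)(k,τ) = Σ_{k₁∈ℤ} ∫_ℝ f(k₁,τ₁) g(k−k₁, τ−τ₁) dτ₁ satisfies ‖f∗g‖_{L²(ℤ×ℝ)} ≤ C (LN)^{1/2} ‖f‖_{L²(ℤ×ℝ)} ‖g‖_{L²(ℤ×ℝ)}. -/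
open MeasureTheory ENNReal
/-- `N` is a dyadic number `2^j`, `j ∈ ℕ` (so `N ≥ 1`). -/
def IsDyadic (N : ℝ) : Prop := ∃ j : ℕ, N = 2 ^ j

/-- `|a| ≈ M` for dyadic `M ≥ 1`: it means `M ≤ |a| < 2M`, except that
`|a| ≈ 1` means `|a| < 2`. -/
def DyadNear (M a : ℝ) : Prop := (M = 1 ∧ |a| < 2) ∨ (M ≠ 1 ∧ M ≤ |a| ∧ |a| < 2 * M)

/-- The product measure on `ℤ × ℝ`: counting measure times Lebesgue measure. -/
noncomputable def countProdVolume : Measure (ℤ × ℝ) :=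
  Measure.count.prod (volume : Measure ℝ)

/-- Convolution on `ℤ × ℝ`. -/
noncomputable def zrConv (f g : ℤ × ℝ → ℂ) : ℤ × ℝ → ℂ :=
  fun p => ∑' k₁ : ℤ, ∫ τ₁ : ℝ, f (k₁, τ₁) * g (p.1 - k₁, p.2 - τ₁)

instance : SigmaFinite (Measure.count : Measure ℤ) := by
  refine ⟨⟨⟨fun n => Set.Icc (-(n:ℤ)) n, fun _ => trivial, fun n => ?_, ?_⟩⟩⟩
  · rw [Measure.count_apply_finite _ (Set.finite_Icc _ _)]
    exact ENNReal.natCast_lt_top _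
  · ext x
    simp only [Set.mem_iUnion, Set.mem_Icc, Set.mem_univ, iff_true]
    exact ⟨x.natAbs, by omega, by omega⟩


instance : MeasureTheory.Measure.IsAddLeftInvariant (Measure.count : Measure ℤ) := by
  constructor
  intro a
  ext s hs
  rw [Measure.map_apply (measurable_const_add a) hs]
  have : (a + ·) ⁻¹' s = (fun x => -a + x) '' s := by
    ext x
    constructor
    · intro h; exact ⟨a + x, h, by ring⟩
    · rintro ⟨y, hy, rfl⟩; simpa using hy
  rw [this, Measure.count_injective_image (add_right_injective _)]

instance : MeasureTheory.Measure.IsAddRightInvariant (Measure.count : Measure ℤ) := by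
  constructor
  intro a
  ext s hs
  rw [Measure.map_apply (measurable_add_const a) hs]
  have : (· + a) ⁻¹' s = (fun x => x + -a) '' s := by
    ext x
    constructor
    · intro h; exact ⟨x + a, h, by ring⟩
    · rintro ⟨y, hy, rfl⟩; simpa using hy
  rw [this, Measure.count_injective_image (add_left_injective _)]

instance : MeasureTheory.Measure.IsNegInvariant (Measure.count : Measure ℤ) := by
  constructor
  ext s hs
  rw [Measure.neg_def, Measure.map_apply measurable_neg hs]
  have : (Neg.neg : ℤ → ℤ) ⁻¹' s = (fun x : ℤ => -x) '' s := by
    ext x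
    constructor
    · intro h; exact ⟨-x, h, by ring⟩
    · rintro ⟨y, hy, rfl⟩; simpa using hy
  rw [this, Measure.count_injective_image neg_injective]

instance : MeasureTheory.Measure.IsAddLeftInvariant countProdVolume := by
  unfold countProdVolume; infer_instance

instance : MeasureTheory.Measure.IsAddRightInvariant countProdVolume := by
  unfold countProdVolume; infer_instance

instance : SFinite countProdVolume := by unfold countProdVolume; infer_instance

instance : MeasureTheory.Measure.IsNegInvariant countProdVolume := by
  unfold countProdVolume
  constructor
  rw [Measure.neg_def]
  change Measure.map (Prod.map Neg.neg Neg.neg) _ = _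
  rw [← Measure.map_prod_map _ _ measurable_neg measurable_neg,
    Measure.map_neg_eq_self, Measure.map_neg_eq_self]

lemma cpv_lint_sub_left (h : ℤ × ℝ → ℝ≥0∞) (hm : Measurable h) (p : ℤ × ℝ) :
    ∫⁻ q, h (p - q) ∂countProdVolume = ∫⁻ q, h q ∂countProdVolume :=
  (Measure.measurePreserving_sub_left countProdVolume p).lintegral_comp hm

lemma cpv_lint_sub_right (h : ℤ × ℝ → ℝ≥0∞) (hm : Measurable h) (p : ℤ × ℝ) :
    ∫⁻ q, h (q - p) ∂countProdVolume = ∫⁻ q, h q ∂countProdVolume :=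
  (measurePreserving_sub_right countProdVolume p).lintegral_comp hm

lemma cpv_lintegral (h : ℤ × ℝ → ℝ≥0∞) (hm : Measurable h) :
    ∫⁻ p, h p ∂countProdVolume = ∑' k : ℤ, ∫⁻ τ, h (k, τ) := by
  rw [countProdVolume, MeasureTheory.lintegral_prod _ hm.aemeasurable]
  rw [MeasureTheory.lintegral_count]

lemma enorm_tsum_le_c (a : ℤ → ℂ) : (‖∑' k, a k‖₊ : ℝ≥0∞) ≤ ∑' k, (‖a k‖₊ : ℝ≥0∞) := by
  by_cases h : Summable a
  · have hn : Summable fun k => ‖a k‖₊ := by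
      rw [← NNReal.summable_coe]
      exact summable_norm_iff.mpr h
    rw [← ENNReal.coe_tsum hn]
    exact_mod_cast nnnorm_tsum_le hn
  · rw [tsum_eq_zero_of_not_summable h]; simp

lemma cs_lintegral {α : Type*} [MeasurableSpace α] (ν : Measure α) (h₁ h₂ : α → ℝ≥0∞)
    (m1 : AEMeasurable h₁ ν) (m2 : AEMeasurable h₂ ν) :
    (∫⁻ x, h₁ x * h₂ x ∂ν) ^ (2:ℝ) ≤ (∫⁻ x, h₁ x ^ (2:ℝ) * h₂ x ∂ν) * ∫⁻ x, h₂ x ∂ν := by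
  have hconj : Real.HolderConjugate 2 2 := Real.HolderConjugate.two_two
  have key := ENNReal.lintegral_mul_le_Lp_mul_Lq ν hconj
    (m1.mul (m2.pow_const (1/2 : ℝ))) (m2.pow_const (1/2 : ℝ))
    (f := fun x => h₁ x * h₂ x ^ (1/2:ℝ)) (g := fun x => h₂ x ^ (1/2:ℝ))
  have e1 : (∫⁻ x, (h₁ x * h₂ x ^ (1/2:ℝ)) * h₂ x ^ (1/2:ℝ) ∂ν) = ∫⁻ x, h₁ x * h₂ x ∂ν := by
    refine lintegral_congr fun x => ?_
    rw [mul_assoc, ← ENNReal.rpow_add_of_nonneg _ _ (by norm_num) (by norm_num)]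
    norm_num
  have e2 : (∫⁻ x, (h₁ x * h₂ x ^ (1/2:ℝ)) ^ (2:ℝ) ∂ν) = ∫⁻ x, h₁ x ^ (2:ℝ) * h₂ x ∂ν := by
    refine lintegral_congr fun x => ?_
    rw [ENNReal.mul_rpow_of_nonneg _ _ (by norm_num), ← ENNReal.rpow_mul]
    norm_num
  have e3 : (∫⁻ x, (h₂ x ^ (1/2:ℝ)) ^ (2:ℝ) ∂ν) = ∫⁻ x, h₂ x ∂ν := by
    refine lintegral_congr fun x => ?_
    rw [← ENNReal.rpow_mul]
    norm_num
  simp only [Pi.mul_apply] at key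
  rw [e1, e2, e3] at key
  calc (∫⁻ x, h₁ x * h₂ x ∂ν) ^ (2:ℝ)
      ≤ ((∫⁻ x, h₁ x ^ (2:ℝ) * h₂ x ∂ν) ^ (1/2:ℝ) * (∫⁻ x, h₂ x ∂ν) ^ (1/2:ℝ)) ^ (2:ℝ) :=
        ENNReal.rpow_le_rpow key (by norm_num)
    _ = (∫⁻ x, h₁ x ^ (2:ℝ) * h₂ x ∂ν) * ∫⁻ x, h₂ x ∂ν := by
        rw [ENNReal.mul_rpow_of_nonneg _ _ (by norm_num), ← ENNReal.rpow_mul, ← ENNReal.rpow_mul]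
        norm_num

lemma slice_vol_le (c L : ℝ) (hL : 0 ≤ L) :
    volume {τ : ℝ | |τ + c| < 2 * L} ≤ ENNReal.ofReal (4 * L) := by
  have hsub : {τ : ℝ | |τ + c| < 2 * L} ⊆ Set.Ioo (-c - 2*L) (-c + 2*L) := by
    intro τ hτ
    simp only [Set.mem_setOf_eq, abs_lt] at hτ
    constructor <;> [linarith [hτ.1]; linarith [hτ.2]]
  calc volume {τ : ℝ | |τ + c| < 2 * L} ≤ volume (Set.Ioo (-c - 2*L) (-c + 2*L)) :=
        measure_mono hsub
    _ = ENNReal.ofReal (4 * L) := by rw [Real.volume_Ioo]; ring_nf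

lemma measure_A_le (N L : ℝ) (hN : 1 ≤ N) (hL : 1 ≤ L) (ε : ℝ) :
    countProdVolume {p : ℤ × ℝ | |(p.1 : ℝ)| < 2*N ∧ abs (p.2 + ε * |(p.1 : ℝ)|) < 2*L}
      ≤ ENNReal.ofReal (28 * (L * N)) := by
  set A : Set (ℤ × ℝ) := {p : ℤ × ℝ | |(p.1 : ℝ)| < 2*N ∧ abs (p.2 + ε * |(p.1 : ℝ)|) < 2*L} with hA
  have hc : Measurable fun p : ℤ × ℝ => |(p.1 : ℝ)| :=
    (Measurable.of_discrete.comp measurable_fst).abs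
  have hmA : MeasurableSet A := by
    refine MeasurableSet.inter ?_ ?_
    · exact measurableSet_lt hc measurable_const
    · exact measurableSet_lt (measurable_snd.add (hc.const_mul ε)).abs measurable_const
  set m : ℕ := ⌈2*N⌉₊ with hm
  set S : Finset ℤ := Finset.Icc (-(m:ℤ)) m with hS
  have hks : ∀ k : ℤ, volume (Prod.mk k ⁻¹' A)
      ≤ Set.indicator (↑S) (fun _ => ENNReal.ofReal (4*L)) k := by
    intro k
    by_cases h : |(k:ℝ)| < 2*N
    · have hkS : k ∈ (↑S : Set ℤ) := by
        have h1 : |(k:ℝ)| < (m:ℝ) + 1 := by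
          have := Nat.le_ceil (2*N)
          calc |(k:ℝ)| < 2*N := h
            _ ≤ (m:ℝ) + 1 := by rw [hm]; linarith
        have h2 : |k| ≤ (m : ℤ) := by
          have h3 : ((|k| : ℤ) : ℝ) < (m:ℝ) + 1 := by push_cast; exact h1
          have h4 : (|k| : ℤ) < (m : ℤ) + 1 := by exact_mod_cast h3
          omega
        simp only [hS, Finset.coe_Icc, Set.mem_Icc]
        exact abs_le.mp h2
      rw [Set.indicator_of_mem hkS]
      refine le_trans (measure_mono ?_) (slice_vol_le (ε*|(k:ℝ)|) L (by linarith))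
      intro τ hτ
      have := hτ.2
      simpa using this
    · have : Prod.mk k ⁻¹' A = ∅ := by
        ext τ; simp only [Set.mem_preimage, Set.mem_empty_iff_false, iff_false, hA,
          Set.mem_setOf_eq]
        intro hcon; exact h hcon.1
      rw [this]
      simp
  have hprod : countProdVolume A = ∑' k : ℤ, volume (Prod.mk k ⁻¹' A) := by
    rw [countProdVolume, Measure.prod_apply hmA, MeasureTheory.lintegral_count]
  rw [hprod]
  calc ∑' k : ℤ, volume (Prod.mk k ⁻¹' A)
      ≤ ∑' k : ℤ, Set.indicator (↑S) (fun _ => ENNReal.ofReal (4*L)) k :=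
        ENNReal.tsum_le_tsum hks
    _ = ∑ k ∈ S, ENNReal.ofReal (4*L) := by
        rw [tsum_eq_sum (s := S) (fun k hk => Set.indicator_of_notMem (by simpa using hk) _)]
        exact Finset.sum_congr rfl fun k hk => Set.indicator_of_mem (by simpa using hk) _
    _ = (S.card : ℝ≥0∞) * ENNReal.ofReal (4*L) := by
        rw [Finset.sum_const, nsmul_eq_mul]
    _ ≤ ENNReal.ofReal (28 * (L * N)) := by
        have hcard : S.card = 2*m + 1 := by
          rw [hS, Int.card_Icc]
          omega
        rw [hcard]
        have : ((2*m+1 : ℕ) : ℝ≥0∞) = ENNReal.ofReal ((2*m+1 : ℕ) : ℝ) :=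
          (ENNReal.ofReal_natCast _).symm
        rw [this, ← ENNReal.ofReal_mul (by positivity)]
        apply ENNReal.ofReal_le_ofReal
        have hmub : (m:ℝ) < 2*N + 1 := Nat.ceil_lt_add_one (by positivity)
        push_cast
        nlinarith [hmub, hN, hL]

lemma cpv_ae_slice {f f' : ℤ × ℝ → ℂ} (h : f =ᵐ[countProdVolume] f') (k : ℤ) :
    (fun τ => f (k, τ)) =ᵐ[volume] fun τ => f' (k, τ) := by
  have hs : countProdVolume {p : ℤ × ℝ | ¬ f p = f' p} = 0 := ae_iff.mp h
  obtain ⟨t, hsub, htm, ht0⟩ := exists_measurable_superset_of_null hs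
  rw [countProdVolume] at ht0
  have hae := (Measure.measure_prod_null htm).mp ht0
  have hall : ∀ x : ℤ, volume (Prod.mk x ⁻¹' t) = 0 := by
    have h0 : Measure.count {x : ℤ | ¬ (fun x => volume (Prod.mk x ⁻¹' t)) x = (0 : ℤ → ℝ≥0∞) x}
        = 0 := ae_iff.mp hae
    have hemp := Measure.count_eq_zero_iff.mp h0
    intro x
    by_contra hx
    exact Set.eq_empty_iff_forall_notMem.mp hemp x (by simpa using hx)
  rw [Filter.eventuallyEq_iff_exists_mem]
  refine ⟨{τ : ℝ | (k, τ) ∉ t}, ?_, fun τ hτ => ?_⟩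
  · rw [mem_ae_iff]
    have : {τ : ℝ | (k, τ) ∉ t}ᶜ = Prod.mk k ⁻¹' t := by
      ext τ; simp
    rw [this]
    exact hall k
  · by_contra hne
    exact hτ (hsub hne)

lemma one_le_dyadic {N : ℝ} (h : ∃ j : ℕ, N = 2 ^ j) : 1 ≤ N := by
  obtain ⟨j, rfl⟩ := h
  exact one_le_pow₀ one_le_two

lemma DyadNear.abs_lt' {M a : ℝ} (h : DyadNear M a) : |a| < 2 * M := by
  rcases h with ⟨h1, h2⟩ | ⟨_, _, h2⟩
  · rw [h1]; linarith
  · exact h2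

/-- **Bilinear wave-wave convolution bound.** There is an absolute constant `C` such that
for all dyadic `N, L ≥ 1`, signs `ε₁, ε₂ = ±1`, and `f, g ∈ L²(ℤ×ℝ)` supported in
`{|k| ≈ N, |τ + εᵢ|k|| ≈ L}` respectively, one has
`‖f∗g‖_{L²} ≤ C (LN)^{1/2} ‖f‖_{L²} ‖g‖_{L²}`. -/
theorem wave_wave_convolution_L2_bound :
    ∃ C : ℝ, 0 < C ∧
      ∀ (N L : ℝ), IsDyadic N → IsDyadic L →
      ∀ (ε₁ ε₂ : ℝ), (ε₁ = 1 ∨ ε₁ = -1) → (ε₂ = 1 ∨ ε₂ = -1) →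
      ∀ f g : ℤ × ℝ → ℂ,
        MemLp f 2 countProdVolume → MemLp g 2 countProdVolume →
        (∀ p : ℤ × ℝ, f p ≠ 0 → DyadNear N ((p.1 : ℝ)) ∧ DyadNear L (p.2 + ε₁ * |(p.1 : ℝ)|)) →
        (∀ p : ℤ × ℝ, g p ≠ 0 → DyadNear N ((p.1 : ℝ)) ∧ DyadNear L (p.2 + ε₂ * |(p.1 : ℝ)|)) →
        eLpNorm (zrConv f g) 2 countProdVolume
          ≤ ENNReal.ofReal (C * (L * N) ^ ((1 : ℝ) / 2)) *
              eLpNorm f 2 countProdVolume * eLpNorm g 2 countProdVolume := by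
  refine ⟨100, by norm_num, ?_⟩
  intro N L hNd hLd ε₁ ε₂ hε₁ hε₂ f g hf hg hfs hgs
  have hN1 : 1 ≤ N := one_le_dyadic hNd
  have hL1 : 1 ≤ L := one_le_dyadic hLd
  -- measurable representatives
  set f' : ℤ × ℝ → ℂ := hf.aestronglyMeasurable.mk f with hf'def
  set g' : ℤ × ℝ → ℂ := hg.aestronglyMeasurable.mk g with hg'def
  have hff' : f =ᵐ[countProdVolume] f' := hf.aestronglyMeasurable.ae_eq_mk
  have hgg' : g =ᵐ[countProdVolume] g' := hg.aestronglyMeasurable.ae_eq_mk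
  have hf'm : Measurable f' := hf.aestronglyMeasurable.stronglyMeasurable_mk.measurable
  have hg'm : Measurable g' := hg.aestronglyMeasurable.stronglyMeasurable_mk.measurable
  -- convolution does not change
  have hconv : ∀ p : ℤ × ℝ, zrConv f g p = zrConv f' g' p := by
    intro p
    unfold zrConv
    refine tsum_congr fun k₁ => ?_
    refine integral_congr_ae ?_
    have h1 : (fun τ₁ => f (k₁, τ₁)) =ᵐ[volume] fun τ₁ => f' (k₁, τ₁) := cpv_ae_slice hff' k₁
    have h2base : (fun τ => g (p.1 - k₁, τ)) =ᵐ[volume] fun τ => g' (p.1 - k₁, τ) :=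
      cpv_ae_slice hgg' (p.1 - k₁)
    have hqmp : Measure.QuasiMeasurePreserving (fun τ₁ : ℝ => p.2 - τ₁) volume volume :=
      (Measure.measurePreserving_sub_left volume p.2).quasiMeasurePreserving
    have h2 : (fun τ₁ => g (p.1 - k₁, p.2 - τ₁)) =ᵐ[volume]
        fun τ₁ => g' (p.1 - k₁, p.2 - τ₁) := hqmp.ae_eq_comp h2base
    exact h1.mul h2
  -- enorm functions
  set Φ : ℤ × ℝ → ℝ≥0∞ := fun q => (‖f' q‖₊ : ℝ≥0∞) with hΦdef
  set Γ : ℤ × ℝ → ℝ≥0∞ := fun q => (‖g' q‖₊ : ℝ≥0∞) with hΓdef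
  have hΦm : Measurable Φ := hf'm.enorm
  have hΓm : Measurable Γ := hg'm.enorm
  set Ig : ℝ≥0∞ := ∫⁻ q, Γ q ∂countProdVolume with hIgdef
  set If2 : ℝ≥0∞ := ∫⁻ q, Φ q ^ (2:ℝ) ∂countProdVolume with hIf2def
  set Ig2 : ℝ≥0∞ := ∫⁻ q, Γ q ^ (2:ℝ) ∂countProdVolume with hIg2def
  -- (A) pointwise bound
  have hpt : ∀ p : ℤ × ℝ, (‖zrConv f g p‖₊ : ℝ≥0∞)
      ≤ ∫⁻ q, Φ q * Γ (p - q) ∂countProdVolume := by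
    intro p
    rw [hconv p]
    have hmq : Measurable fun q : ℤ × ℝ => Φ q * Γ (p - q) :=
      hΦm.mul (hΓm.comp (measurable_const.sub measurable_id))
    rw [cpv_lintegral _ hmq]
    show (‖∑' k₁ : ℤ, ∫ τ₁ : ℝ, f' (k₁, τ₁) * g' (p.1 - k₁, p.2 - τ₁)‖₊ : ℝ≥0∞) ≤ _
    calc (‖∑' k₁ : ℤ, ∫ τ₁ : ℝ, f' (k₁, τ₁) * g' (p.1 - k₁, p.2 - τ₁)‖₊ : ℝ≥0∞)
        ≤ ∑' k₁ : ℤ, (‖∫ τ₁ : ℝ, f' (k₁, τ₁) * g' (p.1 - k₁, p.2 - τ₁)‖₊ : ℝ≥0∞) :=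
          enorm_tsum_le_c _
      _ ≤ ∑' k₁ : ℤ, ∫⁻ τ₁ : ℝ, (‖f' (k₁, τ₁) * g' (p.1 - k₁, p.2 - τ₁)‖₊ : ℝ≥0∞) :=
          ENNReal.tsum_le_tsum fun k₁ => enorm_integral_le_lintegral_enorm _
      _ = ∑' k₁ : ℤ, ∫⁻ τ₁ : ℝ, Φ (k₁, τ₁) * Γ (p - (k₁, τ₁)) := by
          refine tsum_congr fun k₁ => lintegral_congr fun τ₁ => ?_
          rw [nnnorm_mul, ENNReal.coe_mul]
          rfl
      _ = _ := rfl
  -- (B)+(C): Cauchy-Schwarz and invariance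
  have hIgshift : ∀ p : ℤ × ℝ, ∫⁻ q, Γ (p - q) ∂countProdVolume = Ig := fun p =>
    cpv_lint_sub_left Γ hΓm p
  have hpt2 : ∀ p : ℤ × ℝ, (∫⁻ q, Φ q * Γ (p - q) ∂countProdVolume) ^ (2:ℝ)
      ≤ (∫⁻ q, Φ q ^ (2:ℝ) * Γ (p - q) ∂countProdVolume) * Ig := by
    intro p
    have := cs_lintegral countProdVolume Φ (fun q => Γ (p - q)) hΦm.aemeasurable
      ((hΓm.comp (measurable_const.sub measurable_id)).aemeasurable)
    rw [hIgshift p] at this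
    exact this
  -- (D) swap
  have hswap : ∫⁻ p, (∫⁻ q, Φ q ^ (2:ℝ) * Γ (p - q) ∂countProdVolume) ∂countProdVolume
      = If2 * Ig := by
    have hunc : Measurable fun z : (ℤ × ℝ) × (ℤ × ℝ) => Φ z.2 ^ (2:ℝ) * Γ (z.1 - z.2) :=
      ((hΦm.comp measurable_snd).pow_const _).mul (hΓm.comp (measurable_fst.sub measurable_snd))
    rw [lintegral_lintegral_swap hunc.aemeasurable]
    have : ∀ q : ℤ × ℝ, ∫⁻ p, Φ q ^ (2:ℝ) * Γ (p - q) ∂countProdVolume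
        = Φ q ^ (2:ℝ) * Ig := by
      intro q
      rw [lintegral_const_mul' _ _ (by
        exact ENNReal.rpow_ne_top_of_nonneg (by norm_num) ENNReal.coe_ne_top),
        cpv_lint_sub_right Γ hΓm q]
    calc ∫⁻ q, (∫⁻ p, Φ q ^ (2:ℝ) * Γ (p - q) ∂countProdVolume) ∂countProdVolume
        = ∫⁻ q, Φ q ^ (2:ℝ) * Ig ∂countProdVolume := lintegral_congr this
      _ = If2 * Ig := lintegral_mul_const _ (hΦm.pow_const _)
  -- (E) total bound
  have hItot : ∫⁻ p, (‖zrConv f g p‖₊ : ℝ≥0∞) ^ (2:ℝ) ∂countProdVolume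
      ≤ If2 * Ig * Ig := by
    have hmono : ∀ p : ℤ × ℝ, (‖zrConv f g p‖₊ : ℝ≥0∞) ^ (2:ℝ)
        ≤ (∫⁻ q, Φ q ^ (2:ℝ) * Γ (p - q) ∂countProdVolume) * Ig := fun p =>
      le_trans (ENNReal.rpow_le_rpow (hpt p) (by norm_num)) (hpt2 p)
    calc ∫⁻ p, (‖zrConv f g p‖₊ : ℝ≥0∞) ^ (2:ℝ) ∂countProdVolume
        ≤ ∫⁻ p, (∫⁻ q, Φ q ^ (2:ℝ) * Γ (p - q) ∂countProdVolume) * Ig ∂countProdVolume :=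
          lintegral_mono hmono
      _ = (∫⁻ p, (∫⁻ q, Φ q ^ (2:ℝ) * Γ (p - q) ∂countProdVolume) ∂countProdVolume) * Ig := by
          refine lintegral_mul_const _ ?_
          have hunc : Measurable fun z : (ℤ × ℝ) × (ℤ × ℝ) =>
              Φ z.2 ^ (2:ℝ) * Γ (z.1 - z.2) :=
            ((hΦm.comp measurable_snd).pow_const _).mul
              (hΓm.comp (measurable_fst.sub measurable_snd))
          exact hunc.lintegral_prod_right'
      _ = If2 * Ig * Ig := by rw [hswap]
  -- (F) L¹ bound on g via support
  have hIgle : Ig ^ (2:ℝ) ≤ ENNReal.ofReal (28 * (L * N)) * Ig2 := by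
    set A : Set (ℤ × ℝ) :=
      {p : ℤ × ℝ | |(p.1 : ℝ)| < 2*N ∧ abs (p.2 + ε₂ * |(p.1 : ℝ)|) < 2*L} with hAdef
    have hc : Measurable fun p : ℤ × ℝ => |(p.1 : ℝ)| :=
      (Measurable.of_discrete.comp measurable_fst).abs
    have hmA : MeasurableSet A := by
      refine MeasurableSet.inter ?_ ?_
      · exact measurableSet_lt hc measurable_const
      · exact measurableSet_lt (measurable_snd.add (hc.const_mul ε₂)).abs measurable_const
    set χ : ℤ × ℝ → ℝ≥0∞ := A.indicator (fun _ => 1) with hχdef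
    have hχm : Measurable χ := measurable_const.indicator hmA
    set G0 : ℤ × ℝ → ℝ≥0∞ := fun q => (‖g q‖₊ : ℝ≥0∞) with hG0def
    have hG0ae : G0 =ᵐ[countProdVolume] Γ := hgg'.fun_comp fun z => (‖z‖₊ : ℝ≥0∞)
    have hG0m : AEMeasurable G0 countProdVolume := hg.aestronglyMeasurable.enorm
    have hsupp : ∀ q : ℤ × ℝ, G0 q = G0 q * χ q := by
      intro q
      by_cases hq : q ∈ A
      · rw [hχdef]; simp [Set.indicator_of_mem hq]
      · have hgq : g q = 0 := by
          by_contra hne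
          obtain ⟨hd1, hd2⟩ := hgs q hne
          exact hq ⟨hd1.abs_lt', hd2.abs_lt'⟩
        rw [hG0def]; simp [hgq]
    have hIg_eq : Ig = ∫⁻ q, G0 q * χ q ∂countProdVolume := by
      rw [hIgdef, ← lintegral_congr hsupp]
      exact (lintegral_congr_ae hG0ae).symm
    have hcs := cs_lintegral countProdVolume G0 χ hG0m hχm.aemeasurable
    have hχint : ∫⁻ q, χ q ∂countProdVolume ≤ ENNReal.ofReal (28 * (L * N)) := by
      rw [hχdef]
      refine le_trans (le_of_eq (lintegral_indicator_one hmA)) ?_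
      exact measure_A_le N L hN1 hL1 ε₂
    have hG2 : ∫⁻ q, G0 q ^ (2:ℝ) * χ q ∂countProdVolume ≤ Ig2 := by
      have h1 : ∀ q : ℤ × ℝ, G0 q ^ (2:ℝ) * χ q ≤ G0 q ^ (2:ℝ) := by
        intro q
        apply mul_le_of_le_one_right' 
        rw [hχdef]
        exact Set.indicator_le_self' (fun _ _ => zero_le_one) q
      refine le_trans (lintegral_mono h1) ?_
      rw [hIg2def]
      refine le_of_eq (lintegral_congr_ae ?_)
      exact hG0ae.fun_comp fun x => x ^ (2:ℝ)
    calc Ig ^ (2:ℝ) = (∫⁻ q, G0 q * χ q ∂countProdVolume) ^ (2:ℝ) := by rw [hIg_eq]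
      _ ≤ (∫⁻ q, G0 q ^ (2:ℝ) * χ q ∂countProdVolume) * ∫⁻ q, χ q ∂countProdVolume := hcs
      _ ≤ Ig2 * ENNReal.ofReal (28 * (L * N)) := mul_le_mul' hG2 hχint
      _ = ENNReal.ofReal (28 * (L * N)) * Ig2 := mul_comm _ _
  have hIgle' : Ig ≤ ENNReal.ofReal (28 * (L * N)) ^ ((1:ℝ)/2) * Ig2 ^ ((1:ℝ)/2) := by
    have h0 : Ig = (Ig ^ (2:ℝ)) ^ ((1:ℝ)/2) := by
      rw [← ENNReal.rpow_mul]; norm_num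
    rw [h0]
    calc (Ig ^ (2:ℝ)) ^ ((1:ℝ)/2)
        ≤ (ENNReal.ofReal (28 * (L * N)) * Ig2) ^ ((1:ℝ)/2) :=
          ENNReal.rpow_le_rpow hIgle (by norm_num)
      _ = ENNReal.ofReal (28 * (L * N)) ^ ((1:ℝ)/2) * Ig2 ^ ((1:ℝ)/2) :=
          ENNReal.mul_rpow_of_nonneg _ _ (by norm_num)
  -- eLpNorm identities
  have hsn : ∀ h : ℤ × ℝ → ℂ, eLpNorm h 2 countProdVolume
      = (∫⁻ p, (‖h p‖₊ : ℝ≥0∞) ^ (2:ℝ) ∂countProdVolume) ^ ((1:ℝ)/2) := by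
    intro h
    rw [eLpNorm_eq_lintegral_rpow_enorm_toReal two_ne_zero ENNReal.ofNat_ne_top]
    norm_num
    rfl
  have hfnorm : eLpNorm f 2 countProdVolume = If2 ^ ((1:ℝ)/2) := by
    rw [hsn f, hIf2def]
    congr 1
    refine lintegral_congr_ae ?_
    exact hff'.fun_comp fun z => (‖z‖₊ : ℝ≥0∞) ^ (2:ℝ)
  have hgnorm : eLpNorm g 2 countProdVolume = Ig2 ^ ((1:ℝ)/2) := by
    rw [hsn g, hIg2def]
    congr 1
    refine lintegral_congr_ae ?_
    exact hgg'.fun_comp fun z => (‖z‖₊ : ℝ≥0∞) ^ (2:ℝ)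
  -- real constant estimate
  have hofreal : ENNReal.ofReal (28 * (L * N)) ^ ((1:ℝ)/2)
      ≤ ENNReal.ofReal (100 * (L * N) ^ ((1:ℝ)/2)) := by
    rw [ENNReal.ofReal_rpow_of_nonneg (by positivity : (0:ℝ) ≤ 28 * (L * N)) (by norm_num : (0:ℝ) ≤ (1:ℝ)/2)]
    apply ENNReal.ofReal_le_ofReal
    have hLN : (0:ℝ) ≤ L * N := by positivity
    calc (28 * (L * N)) ^ ((1:ℝ)/2) ≤ (10000 * (L * N)) ^ ((1:ℝ)/2) := by
          apply Real.rpow_le_rpow (by positivity) (by nlinarith) (by norm_num)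
      _ = (10000:ℝ) ^ ((1:ℝ)/2) * (L * N) ^ ((1:ℝ)/2) :=
          Real.mul_rpow (by norm_num) hLN
      _ = 100 * (L * N) ^ ((1:ℝ)/2) := by
          congr 1
          rw [show (10000:ℝ) = 100 ^ (2:ℕ) by norm_num, ← Real.rpow_natCast,
            ← Real.rpow_mul (by norm_num)]
          norm_num
  -- final chain
  calc eLpNorm (zrConv f g) 2 countProdVolume
      = (∫⁻ p, (‖zrConv f g p‖₊ : ℝ≥0∞) ^ (2:ℝ) ∂countProdVolume) ^ ((1:ℝ)/2) := hsn _
    _ ≤ (If2 * Ig * Ig) ^ ((1:ℝ)/2) := ENNReal.rpow_le_rpow hItot (by norm_num)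
    _ = If2 ^ ((1:ℝ)/2) * Ig := by
        rw [mul_assoc, ENNReal.mul_rpow_of_nonneg _ _ (by norm_num)]
        congr 1
        have : Ig * Ig = Ig ^ (2:ℝ) := by
          rw [show (2:ℝ) = ((2:ℕ):ℝ) by norm_num, ENNReal.rpow_natCast, sq]
        rw [this, ← ENNReal.rpow_mul]
        norm_num
    _ ≤ If2 ^ ((1:ℝ)/2) * (ENNReal.ofReal (28 * (L * N)) ^ ((1:ℝ)/2) * Ig2 ^ ((1:ℝ)/2)) :=
        mul_le_mul_right hIgle' _
    _ ≤ If2 ^ ((1:ℝ)/2) * (ENNReal.ofReal (100 * (L * N) ^ ((1:ℝ)/2)) * Ig2 ^ ((1:ℝ)/2)) :=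
        mul_le_mul_right (mul_le_mul_left hofreal _) _
    _ = ENNReal.ofReal (100 * (L * N) ^ ((1:ℝ)/2)) *
          eLpNorm f 2 countProdVolume * eLpNorm g 2 countProdVolume := by
        rw [hfnorm, hgnorm]; ring
end

section
/- There exists a constant C > 0 such that for every u ∈ H¹(𝕋; ℂ) and all n, v ∈ L²(𝕋; ℝ): ‖∂ₓu‖_{L²}² + ½‖n‖_{L²}² + ½‖v‖_{L²}² ≤ 2 E(u, n, v) + C ( ‖u‖_{L²}⁶ + ‖u‖_{L²}⁴ ), where E(u, n, v) = ∫_𝕋 ( |∂ₓu|² + ½n² + ½v² + n|u|² ) dx. In particular, the Hamiltonian energy together with the conserved mass controls the H¹ × L² × L² norm. -/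
open Real MeasureTheory intervalIntegral

set_option maxHeartbeats 1000000

/-- **Energy controls the `H¹ × L² × L²` norm.**
There is a constant `C > 0` such that for every `2π`-periodic `u ∈ H¹(𝕋;ℂ)`
(represented by a continuously differentiable periodic function with derivative `u'`)
and all `2π`-periodic `n, v ∈ L²(𝕋;ℝ)`:
`‖u'‖² + ½‖n‖² + ½‖v‖² ≤ 2 E(u,n,v) + C (‖u‖_{L²}⁶ + ‖u‖_{L²}⁴)`, where
`E(u,n,v) = ∫_𝕋 (|u'|² + ½n² + ½v² + n|u|²) dx`. -/
theorem zakharov_energy_controls_norm :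
    ∃ C : ℝ, 0 < C ∧
      ∀ (u u' : ℝ → ℂ) (n v : ℝ → ℝ),
        (∀ x, u (x + 2 * π) = u x) → (∀ x, u' (x + 2 * π) = u' x) →
        (∀ x, n (x + 2 * π) = n x) → (∀ x, v (x + 2 * π) = v x) →
        (∀ x, HasDerivAt u (u' x) x) → Continuous u' →
        Measurable n → Measurable v →
        IntervalIntegrable (fun x => n x ^ 2) volume 0 (2 * π) →
        IntervalIntegrable (fun x => v x ^ 2) volume 0 (2 * π) →
        (∫ x in (0 : ℝ)..(2 * π), ‖u' x‖ ^ 2)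
            + (1 / 2) * (∫ x in (0 : ℝ)..(2 * π), n x ^ 2)
            + (1 / 2) * (∫ x in (0 : ℝ)..(2 * π), v x ^ 2)
          ≤ 2 * (∫ x in (0 : ℝ)..(2 * π),
                  (‖u' x‖ ^ 2 + (1 / 2) * n x ^ 2 + (1 / 2) * v x ^ 2 + n x * ‖u x‖ ^ 2))
            + C * ((∫ x in (0 : ℝ)..(2 * π), ‖u x‖ ^ 2) ^ 3
                    + (∫ x in (0 : ℝ)..(2 * π), ‖u x‖ ^ 2) ^ 2) := by
  refine ⟨6, by norm_num, ?_⟩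
  intro u u' n v _ _ _ _ hderiv hcont hmn _ hin hiv
  have hπ : (0:ℝ) < 2 * π := by positivity
  have hcu : Continuous u := by
    rw [continuous_iff_continuousAt]; exact fun x => (hderiv x).continuousAt
  have hcf : Continuous (fun x => ‖u x‖ ^ 2) := (hcu.norm.pow 2)
  have hiM : IntervalIntegrable (fun x => ‖u x‖ ^ 2) volume 0 (2*π) :=
    hcf.intervalIntegrable _ _
  have hiA : IntervalIntegrable (fun x => ‖u' x‖ ^ 2) volume 0 (2*π) :=
    (hcont.norm.pow 2).intervalIntegrable _ _
  set M := ∫ x in (0:ℝ)..(2*π), ‖u x‖ ^ 2 with hMdef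
  set A := ∫ x in (0:ℝ)..(2*π), ‖u' x‖ ^ 2 with hAdef
  set N := ∫ x in (0:ℝ)..(2*π), n x ^ 2 with hNdef
  set V := ∫ x in (0:ℝ)..(2*π), v x ^ 2 with hVdef
  have hM0 : 0 ≤ M := intervalIntegral.integral_nonneg hπ.le (fun x _ => by positivity)
  have hA0 : 0 ≤ A := intervalIntegral.integral_nonneg hπ.le (fun x _ => by positivity)
  have hN0 : 0 ≤ N := intervalIntegral.integral_nonneg hπ.le (fun x _ => by positivity)
  have hV0 : 0 ≤ V := intervalIntegral.integral_nonneg hπ.le (fun x _ => by positivity)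
  set ε : ℝ := 1 / (2 * (M + 1)) with hεdef
  have hε0 : 0 < ε := by rw [hεdef]; positivity
  have hεinv : 1 / ε = 2 * (M + 1) := by rw [hεdef, one_div_one_div]
  -- the comparison function g
  have hcg : Continuous (fun x => ε * ‖u' x‖ ^ 2 + (1/ε) * ‖u x‖ ^ 2) :=
    (continuous_const.mul (hcont.norm.pow 2)).add (continuous_const.mul hcf)
  have hg0 : ∀ x, 0 ≤ ε * ‖u' x‖ ^ 2 + (1/ε) * ‖u x‖ ^ 2 := by
    intro x
    have : 0 ≤ 1/ε := by positivity
    positivity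
  set G := ∫ x in (0:ℝ)..(2*π), (ε * ‖u' x‖ ^ 2 + (1/ε) * ‖u x‖ ^ 2) with hGdef
  have hGval : G = ε * A + (1/ε) * M := by
    rw [hGdef, intervalIntegral.integral_add (hiA.const_mul ε) (hiM.const_mul (1/ε)),
      intervalIntegral.integral_const_mul, intervalIntegral.integral_const_mul]
  -- derivative of ‖u‖²
  have hdf : ∀ x, HasDerivAt (fun y => ‖u y‖ ^ 2) (2 * (inner ℝ (u x) (u' x) : ℝ)) x :=
    fun x => (hderiv x).norm_sq
  have hcf' : Continuous (fun x => 2 * (inner ℝ (u x) (u' x) : ℝ)) :=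
    continuous_const.mul (hcu.inner hcont)
  have hf'g : ∀ x, |2 * (inner ℝ (u x) (u' x) : ℝ)| ≤ ε * ‖u' x‖ ^ 2 + (1/ε) * ‖u x‖ ^ 2 := by
    intro x
    have h1 : |(inner ℝ (u x) (u' x) : ℝ)| ≤ ‖u x‖ * ‖u' x‖ := abs_real_inner_le_norm _ _
    have hεε : ε * (1/ε) = 1 := by field_simp
    rw [abs_mul, abs_two]
    nlinarith [sq_nonneg (‖u x‖ - ε * ‖u' x‖), hε0, mul_pos hε0 hε0,
      mul_le_mul_of_nonneg_left h1 hε0.le, norm_nonneg (u x), norm_nonneg (u' x)]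
  -- minimum point
  obtain ⟨y₀, hy₀, hmin⟩ := isCompact_Icc.exists_isMinOn (Set.nonempty_Icc.2 hπ.le)
    hcf.continuousOn
  have hfy₀0 : 0 ≤ ‖u y₀‖ ^ 2 := by positivity
  have h2πf : 2 * π * ‖u y₀‖ ^ 2 ≤ M := by
    have h := intervalIntegral.integral_mono_on hπ.le
      (_root_.intervalIntegrable_const (c := ‖u y₀‖ ^ 2)) hiM (fun x hx => hmin hx)
    simpa [intervalIntegral.integral_const, smul_eq_mul] using h
  have hfy₀M : ‖u y₀‖ ^ 2 ≤ M := by nlinarith [Real.pi_gt_three]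
  -- sup bound
  have key : ∀ x ∈ Set.Icc (0:ℝ) (2*π), ‖u x‖ ^ 2 ≤ ‖u y₀‖ ^ 2 + G := by
    have hsub : ∀ a b : ℝ, a ∈ Set.Icc (0:ℝ) (2*π) → b ∈ Set.Icc (0:ℝ) (2*π) → a ≤ b →
        |‖u b‖ ^ 2 - ‖u a‖ ^ 2| ≤ G := by
      intro a b ha hb hab
      have h1 : ∫ y in a..b, 2 * (inner ℝ (u y) (u' y) : ℝ) = ‖u b‖ ^ 2 - ‖u a‖ ^ 2 :=
        intervalIntegral.integral_eq_sub_of_hasDerivAt (fun y _ => hdf y)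
          (hcf'.intervalIntegrable _ _)
      have h2 : |∫ y in a..b, 2 * (inner ℝ (u y) (u' y) : ℝ)|
          ≤ ∫ y in a..b, |2 * (inner ℝ (u y) (u' y) : ℝ)| :=
        intervalIntegral.abs_integral_le_integral_abs hab
      have h3 : (∫ y in a..b, |2 * (inner ℝ (u y) (u' y) : ℝ)|)
          ≤ ∫ y in a..b, (ε * ‖u' y‖ ^ 2 + (1/ε) * ‖u y‖ ^ 2) :=
        intervalIntegral.integral_mono_on hab (hcf'.abs.intervalIntegrable _ _)
          (hcg.intervalIntegrable _ _) (fun y _ => hf'g y)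
      have h4 : (∫ y in a..b, (ε * ‖u' y‖ ^ 2 + (1/ε) * ‖u y‖ ^ 2)) ≤ G :=
        intervalIntegral.integral_mono_interval ha.1 hab hb.2
          (Filter.Eventually.of_forall fun y => hg0 y) (hcg.intervalIntegrable _ _)
      rw [← h1]
      exact h2.trans (h3.trans h4)
    intro x hx
    have hxy : |‖u x‖ ^ 2 - ‖u y₀‖ ^ 2| ≤ G := by
      rcases le_total y₀ x with h | h
      · exact hsub y₀ x hy₀ hx h
      · rw [abs_sub_comm]; exact hsub x y₀ hx hy₀ h
    linarith [le_abs_self (‖u x‖ ^ 2 - ‖u y₀‖ ^ 2)]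
  have hG0 : 0 ≤ G := intervalIntegral.integral_nonneg hπ.le (fun x _ => hg0 x)
  have hS0 : 0 ≤ ‖u y₀‖ ^ 2 + G := by linarith
  -- F := ∫ ‖u‖⁴
  have hiF : IntervalIntegrable (fun x => (‖u x‖ ^ 2) ^ 2) volume 0 (2*π) :=
    (hcf.pow 2).intervalIntegrable _ _
  set F := ∫ x in (0:ℝ)..(2*π), (‖u x‖ ^ 2) ^ 2 with hFdef
  have hF : F ≤ (‖u y₀‖ ^ 2 + G) * M := by
    have h1 : F ≤ ∫ x in (0:ℝ)..(2*π), (‖u y₀‖ ^ 2 + G) * ‖u x‖ ^ 2 := by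
      rw [hFdef]
      refine intervalIntegral.integral_mono_on hπ.le hiF
        ((continuous_const.mul hcf).intervalIntegrable _ _) (fun x hx => ?_)
      have h := key x hx
      have h0 : (0:ℝ) ≤ ‖u x‖ ^ 2 := by positivity
      nlinarith
    rwa [intervalIntegral.integral_const_mul] at h1
  -- P := ∫ n ‖u‖²
  have hiP : IntervalIntegrable (fun x => n x * ‖u x‖ ^ 2) volume 0 (2*π) := by
    refine ((hin.add (_root_.intervalIntegrable_const (c := 1))).const_mul
      (‖u y₀‖ ^ 2 + G)).mono_fun
      ((hmn.mul hcf.measurable).aestronglyMeasurable) ?_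
    rw [Set.uIoc_of_le hπ.le]
    refine ae_restrict_of_forall_mem measurableSet_Ioc (fun x hx => ?_)
    have hx' : x ∈ Set.Icc (0:ℝ) (2*π) := Set.Ioc_subset_Icc_self hx
    have h1 := key x hx'
    have h2 : |n x| ≤ n x ^ 2 + 1 := by nlinarith [sq_nonneg (|n x| - 1), sq_abs (n x)]
    have h3 : (0:ℝ) ≤ ‖u x‖ ^ 2 := by positivity
    have h4 : (0:ℝ) ≤ n x ^ 2 + 1 := by positivity
    simp only [Real.norm_eq_abs, abs_mul]
    rw [abs_of_nonneg h3, abs_of_nonneg hS0, abs_of_nonneg h4]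
    nlinarith [mul_le_mul h2 h1 h3 h4]
  set P := ∫ x in (0:ℝ)..(2*π), n x * ‖u x‖ ^ 2 with hPdef
  have hPbound : -(2 * P) ≤ (1/2) * N + 2 * F := by
    have h1 : (∫ x in (0:ℝ)..(2*π), -(2 * (n x * ‖u x‖ ^ 2)))
        ≤ ∫ x in (0:ℝ)..(2*π), ((1/2) * n x ^ 2 + 2 * (‖u x‖ ^ 2) ^ 2) := by
      refine intervalIntegral.integral_mono_on hπ.le ((hiP.const_mul 2).neg)
        ((hin.const_mul (1/2)).add (hiF.const_mul 2)) (fun x _ => ?_)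
      nlinarith [sq_nonneg (n x + 2 * ‖u x‖ ^ 2)]
    rw [intervalIntegral.integral_neg, intervalIntegral.integral_const_mul,
      intervalIntegral.integral_add (hin.const_mul (1/2)) (hiF.const_mul 2),
      intervalIntegral.integral_const_mul, intervalIntegral.integral_const_mul] at h1
    linarith [h1]
  -- split the energy integral
  have hEsplit : (∫ x in (0:ℝ)..(2*π),
      (‖u' x‖ ^ 2 + (1/2) * n x ^ 2 + (1/2) * v x ^ 2 + n x * ‖u x‖ ^ 2))
      = A + (1/2) * N + (1/2) * V + P := by
    rw [intervalIntegral.integral_add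
        ((hiA.add (hin.const_mul (1/2))).add (hiv.const_mul (1/2))) hiP,
      intervalIntegral.integral_add (hiA.add (hin.const_mul (1/2))) (hiv.const_mul (1/2)),
      intervalIntegral.integral_add hiA (hin.const_mul (1/2)),
      intervalIntegral.integral_const_mul, intervalIntegral.integral_const_mul]
  rw [hEsplit]
  -- final arithmetic
  have hεA : 2 * (ε * A) * M ≤ A := by
    have hεε : ε * (2 * (M + 1)) = 1 := by rw [hεdef]; field_simp
    nlinarith [mul_nonneg hε0.le hA0, hM0]
  have hGM : 2 * G * M ≤ A + 4 * M^3 + 4 * M^2 := by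
    rw [hGval, hεinv]
    nlinarith [hεA, hM0]
  have hFM : 2 * F ≤ A + 4 * M^3 + 6 * M^2 := by
    nlinarith [hF, mul_le_mul_of_nonneg_right hfy₀M hM0, hGM, hM0]
  nlinarith [hPbound, hFM, hV0, hN0, hM0]
end
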